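/- arXiv:quant-ph/0608064 — 2 statements merged into one kernel-verified Lean document; each statement's English description precedes it below -/
import Mathlib

section
/- Let n ≥ 1 be a natural number, let S^n be the unit sphere in ℝ^{n+1} with its standard surface measure σ, let 𝒮_{n-1} = 2π^{n/2}/Γ(n/2), and set R_n = (2/n) · 𝒮_{n-1}. Then for any unit vector b ∈ ℝ^{n+1}, the vector-valued integral ∫_{S^n} λ · sgn(⟪b, λ⟫) dσ(λ) equals R_n · b. -/
open MeasureTheory Metric Real
open scoped RealInnerProductSpace

/-- The standard (rotation-invariant) surface measure on the unit sphere
`S^n ⊆ ℝ^{n+1}`, with total mass the surface area `𝒮_n`. -/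
noncomputable def sphereSurfaceMeasure (n : ℕ) :
    Measure (sphere (0 : EuclideanSpace ℝ (Fin (n + 1))) 1) :=
  (volume : Measure (EuclideanSpace ℝ (Fin (n + 1)))).toSphere

/-- The surface area of the unit sphere in `ℝ^m`: `𝒮_{m-1} = 2 π^{m/2} / Γ(m/2)`. -/
noncomputable def sphereArea (m : ℕ) : ℝ :=
  2 * Real.pi ^ ((m : ℝ) / 2) / Real.Gamma ((m : ℝ) / 2)

/-- `sgn x = 1` if `x ≥ 0` and `sgn x = -1` if `x < 0`. -/
noncomputable def sgn (x : ℝ) : ℝ := if 0 ≤ x then 1 else -1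

lemma measurable_sgn : Measurable sgn := by
  unfold sgn
  exact Measurable.ite (measurableSet_le measurable_const measurable_id)
    measurable_const measurable_const

lemma abs_sgn (t : ℝ) : |sgn t| = 1 := by
  unfold sgn; split <;> simp

lemma sgn_mul_pos {c : ℝ} (hc : 0 < c) (t : ℝ) : sgn (c * t) = sgn t := by
  unfold sgn
  rcases le_or_gt 0 t with h | h
  · rw [if_pos h, if_pos (mul_nonneg hc.le h)]
  · rw [if_neg (not_le.2 h), if_neg (not_le.2 (mul_neg_of_pos_of_neg hc h))]

open Set in
lemma radial_integral (m : ℕ) :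
    ∫ x in Ioi (0 : ℝ), x ^ m * exp (-x ^ 2) = Real.Gamma ((m + 1 : ℝ) / 2) / 2 := by
  have h := integral_comp_rpow_Ioi
    (fun u : ℝ => exp (-u) * u ^ ((m + 1 : ℝ) / 2 - 1) / 2) (two_ne_zero (α := ℝ))
  have h2 : ∫ y in Ioi (0 : ℝ), exp (-y) * y ^ ((m + 1 : ℝ) / 2 - 1) / 2
      = Real.Gamma ((m + 1 : ℝ) / 2) / 2 := by
    rw [integral_div, ← Real.Gamma_eq_integral (by positivity)]
  rw [← h2, ← h]
  refine setIntegral_congr_fun measurableSet_Ioi fun x hx => ?_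
  have hx0 : (0 : ℝ) < x := hx
  have hrr : (x ^ (2 : ℝ)) ^ ((m + 1 : ℝ) / 2 - 1) = x ^ ((m : ℝ) - 1) := by
    rw [← Real.rpow_mul hx0.le]
    congr 1
    ring
  have hx2 : x ^ (2 : ℝ) = x ^ 2 := by
    rw [show (2 : ℝ) = ((2 : ℕ) : ℝ) by norm_num, Real.rpow_natCast]
  have h1 : x ^ ((2 : ℝ) - 1) = x := by
    rw [show (2 : ℝ) - 1 = 1 by norm_num, Real.rpow_one]
  rw [smul_eq_mul, hrr, hx2, h1, abs_of_pos (by norm_num : (0:ℝ) < 2)]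
  have hxm : x * x ^ ((m : ℝ) - 1) = x ^ m := by
    calc x * x ^ ((m : ℝ) - 1) = x ^ (1 : ℝ) * x ^ ((m : ℝ) - 1) := by rw [Real.rpow_one]
    _ = x ^ ((1 : ℝ) + ((m : ℝ) - 1)) := (Real.rpow_add hx0 _ _).symm
    _ = x ^ ((m : ℕ) : ℝ) := by ring_nf
    _ = x ^ m := Real.rpow_natCast x m
  rw [← hxm]
  ring

lemma integral_exp_neg_sq : ∫ t : ℝ, exp (-t ^ 2) = Real.sqrt π := by
  simpa using integral_gaussian 1

lemma integral_sgn_mul_exp : ∫ t : ℝ, sgn t * t * exp (-t ^ 2) = 1 := by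
  have h1 : (fun t : ℝ => sgn t * t * exp (-t ^ 2))
      = fun t : ℝ => |t| * exp (-|t| ^ 2) := by
    funext t
    rcases le_or_gt 0 t with h | h
    · simp only [abs_of_nonneg h]; unfold sgn; rw [if_pos h]; ring
    · simp only [abs_of_neg h]; unfold sgn; rw [if_neg (not_le.2 h)]
      simp only [neg_sq]; ring
  rw [h1, integral_comp_abs (f := fun x : ℝ => x * exp (-x ^ 2))]
  have h := radial_integral 1
  simp only [pow_one] at h
  rw [h]
  norm_num [Real.Gamma_one]

open Set in
lemma integral_sgn_exp : ∫ t : ℝ, sgn t * exp (-t ^ 2) = 0 := by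
  have hexp : Integrable (fun t : ℝ => exp (-t ^ 2)) := by
    simpa using integrable_exp_neg_mul_sq (one_pos (α := ℝ))
  have hint : Integrable (fun t : ℝ => sgn t * exp (-t ^ 2)) := by
    refine hexp.mono' ((measurable_sgn.mul (by fun_prop)).aestronglyMeasurable) ?_
    filter_upwards with t
    rw [norm_mul, Real.norm_eq_abs, abs_sgn, one_mul, Real.norm_eq_abs,
      abs_of_pos (exp_pos _)]
  rw [← intervalIntegral.integral_Iio_add_Ici (b := (0 : ℝ)) hint.integrableOn hint.integrableOn]
  have h1 : ∫ t in Iio (0 : ℝ), sgn t * exp (-t ^ 2)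
      = - ∫ t in Iio (0 : ℝ), exp (-t ^ 2) := by
    rw [← integral_neg]
    refine setIntegral_congr_fun measurableSet_Iio fun t ht => ?_
    unfold sgn; rw [if_neg (not_le.2 ht)]; ring
  have h2 : ∫ t in Ici (0 : ℝ), sgn t * exp (-t ^ 2)
      = ∫ t in Ici (0 : ℝ), exp (-t ^ 2) := by
    refine setIntegral_congr_fun measurableSet_Ici fun t ht => ?_
    unfold sgn; rw [if_pos (show (0:ℝ) ≤ t from ht)]; ring
  have h3 : ∫ t in Iio (0 : ℝ), exp (-t ^ 2) = ∫ t in Ici (0 : ℝ), exp (-t ^ 2) := by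
    rw [← MeasureTheory.integral_Iic_eq_integral_Iio]
    have h := integral_comp_neg_Ioi (0 : ℝ) (fun t : ℝ => exp (-t ^ 2))
    simp only [neg_zero, neg_sq] at h
    rw [← h, MeasureTheory.integral_Ici_eq_integral_Ioi]
  rw [h1, h2, h3]; ring

open Set in
lemma integral_id_exp : ∫ t : ℝ, t * exp (-t ^ 2) = 0 := by
  have hint : Integrable (fun t : ℝ => t * exp (-t ^ 2)) := by
    simpa using integrable_mul_exp_neg_mul_sq (one_pos (α := ℝ))
  rw [← intervalIntegral.integral_Iic_add_Ioi (b := (0 : ℝ)) hint.integrableOn hint.integrableOn]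
  have h := integral_comp_neg_Ioi (0 : ℝ) (fun t : ℝ => t * exp (-t ^ 2))
  simp only [neg_zero, neg_sq, neg_mul] at h
  rw [integral_neg] at h
  rw [← h]
  ring

theorem integral_sgn_inner_smul_sphere (n : ℕ) (hn : 1 ≤ n)
    (b : EuclideanSpace ℝ (Fin (n + 1))) (hb : ‖b‖ = 1) :
    ∫ l : sphere (0 : EuclideanSpace ℝ (Fin (n + 1))) 1,
        sgn ⟪b, (l : EuclideanSpace ℝ (Fin (n + 1)))⟫ •
          (l : EuclideanSpace ℝ (Fin (n + 1))) ∂(sphereSurfaceMeasure n) =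
      ((2 / n) * sphereArea n) • b := by
  classical
  haveI : IsFiniteMeasure (sphereSurfaceMeasure n) := by
    unfold sphereSurfaceMeasure; infer_instance
  -- an orthonormal basis with `B 0 = b`
  obtain ⟨B, hB⟩ : ∃ B : OrthonormalBasis (Fin (n + 1)) ℝ (EuclideanSpace ℝ (Fin (n + 1))),
      B 0 = b := by
    have hcard : Module.finrank ℝ (EuclideanSpace ℝ (Fin (n + 1)))
        = Fintype.card (Fin (n + 1)) := by simp [finrank_euclideanSpace_fin]
    have horth : Orthonormal ℝ (Set.restrict {(0 : Fin (n + 1))} (fun _ => b)) := by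
      constructor
      · rintro ⟨i, hi⟩
        exact hb
      · rintro ⟨i, hi⟩ ⟨j, hj⟩ hij
        have h1 : i = 0 := hi
        have h2 : j = 0 := hj
        exact absurd (Subtype.ext (h1.trans h2.symm)) hij
    obtain ⟨B, hB⟩ := horth.exists_orthonormalBasis_extension_of_card_eq hcard
    exact ⟨B, hB 0 rfl⟩
  have hdim : Module.finrank ℝ (EuclideanSpace ℝ (Fin (n + 1))) = n + 1 :=
    finrank_euclideanSpace_fin
  set K : ℝ := Real.Gamma ((n : ℝ) / 2 + 1) / 2 with hKdef
  have hn0 : (n : ℝ) ≠ 0 := Nat.cast_ne_zero.2 (by omega)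
  have hKpos : 0 < K := by
    rw [hKdef]
    have : 0 < Real.Gamma ((n : ℝ) / 2 + 1) := Real.Gamma_pos_of_pos (by positivity)
    linarith
  -- Step 1: Euclidean full-space integrals
  have euclid : ∀ j : Fin (n + 1),
      (∫ x : EuclideanSpace ℝ (Fin (n + 1)), sgn ⟪b, x⟫ * ⟪B j, x⟫ * exp (-‖x‖ ^ 2))
        = if j = 0 then Real.sqrt π ^ n else 0 := by
    intro j
    have e1 : (∫ x : EuclideanSpace ℝ (Fin (n + 1)), sgn ⟪b, x⟫ * ⟪B j, x⟫ * exp (-‖x‖ ^ 2))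
        = ∫ y : EuclideanSpace ℝ (Fin (n + 1)), sgn (y 0) * y j * exp (-‖y‖ ^ 2) := by
      rw [← B.measurePreserving_measurableEquiv.integral_comp'
        (fun y : EuclideanSpace ℝ (Fin (n + 1)) => sgn (y 0) * y j * exp (-‖y‖ ^ 2))]
      congr 1
      funext x
      have h0 : (B.measurableEquiv x : EuclideanSpace ℝ (Fin (n + 1))) = B.repr x := rfl
      simp only [h0, B.repr_apply_apply, LinearIsometryEquiv.norm_map, hB]
    have e2 : (∫ y : EuclideanSpace ℝ (Fin (n + 1)), sgn (y 0) * y j * exp (-‖y‖ ^ 2))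
        = ∫ z : Fin (n + 1) → ℝ, sgn (z 0) * z j * ∏ i, exp (-(z i) ^ 2) := by
      rw [← (MeasurePreserving.symm ((MeasurableEquiv.toLp 2 (Fin (n + 1) → ℝ)).symm)
        (EuclideanSpace.volume_preserving_symm_measurableEquiv_toLp (Fin (n + 1)))).integral_comp'
        (g := fun y : EuclideanSpace ℝ (Fin (n + 1)) => sgn (y 0) * y j * exp (-‖y‖ ^ 2))]
      congr 1
      funext z
      have hcoord : ∀ i, (((MeasurableEquiv.toLp 2 (Fin (n + 1) → ℝ)).symm).symm z) i = z i := by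
        intro i
        rfl
      have hnorm : ‖((MeasurableEquiv.toLp 2 (Fin (n + 1) → ℝ)).symm).symm z‖ ^ 2
          = ∑ i, (z i) ^ 2 := by
        rw [EuclideanSpace.norm_eq]
        rw [Real.sq_sqrt (by positivity)]
        refine Finset.sum_congr rfl fun i _ => ?_
        rw [hcoord, Real.norm_eq_abs, sq_abs]
      simp only [hcoord, hnorm]
      rw [← Finset.sum_neg_distrib, Real.exp_sum]
    rw [e1, e2]
    by_cases hj : j = 0
    · subst hj
      rw [if_pos rfl]
      set f : Fin (n + 1) → ℝ → ℝ :=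
        fun i t => if i = 0 then sgn t * t * exp (-t ^ 2) else exp (-t ^ 2) with hf
      have hprod : ∀ z : Fin (n + 1) → ℝ,
          sgn (z 0) * z 0 * ∏ i, exp (-(z i) ^ 2) = ∏ i, f i (z i) := by
        intro z
        have h1 : ∏ i ∈ Finset.univ.erase 0, f i (z i)
            = ∏ i ∈ Finset.univ.erase 0, exp (-(z i) ^ 2) :=
          Finset.prod_congr rfl fun i hi => by
            simp only [hf]; exact if_neg (Finset.ne_of_mem_erase hi)
        rw [← Finset.mul_prod_erase Finset.univ (fun i => f i (z i)) (Finset.mem_univ 0), h1,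
          ← Finset.mul_prod_erase Finset.univ (fun i => exp (-(z i) ^ 2)) (Finset.mem_univ 0)]
        have h2 : f 0 (z 0) = sgn (z 0) * z 0 * exp (-(z 0) ^ 2) := by
          simp only [hf, if_pos rfl]
        rw [h2]
        ring
      simp_rw [hprod]
      rw [MeasureTheory.volume_pi, MeasureTheory.integral_fintype_prod_eq_prod f]
      rw [← Finset.mul_prod_erase Finset.univ (fun i => ∫ t : ℝ, f i t) (Finset.mem_univ 0)]
      have h0 : (∫ t : ℝ, f 0 t) = 1 := by
        have : f 0 = fun t => sgn t * t * exp (-t ^ 2) := by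
          funext t; simp only [hf, if_pos rfl]
        rw [this]
        exact integral_sgn_mul_exp
      have hrest : ∏ i ∈ Finset.univ.erase 0, (∫ t : ℝ, f i t) = Real.sqrt π ^ n := by
        rw [Finset.prod_congr rfl (fun i hi => show (∫ t : ℝ, f i t) = Real.sqrt π by
          have : f i = fun t => exp (-t ^ 2) :=
            funext fun t => by simp only [hf]; exact if_neg (Finset.ne_of_mem_erase hi)
          rw [this]; exact integral_exp_neg_sq), Finset.prod_const]
        congr 1
        rw [Finset.card_erase_of_mem (Finset.mem_univ 0), Finset.card_univ, Fintype.card_fin]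
        omega
      rw [h0, hrest, one_mul]
    · rw [if_neg hj]
      set f : Fin (n + 1) → ℝ → ℝ :=
        fun i t => if i = 0 then sgn t * exp (-t ^ 2)
          else if i = j then t * exp (-t ^ 2) else exp (-t ^ 2) with hf
      have hjmem : j ∈ Finset.univ.erase (0 : Fin (n + 1)) :=
        Finset.mem_erase.2 ⟨hj, Finset.mem_univ j⟩
      have hprod : ∀ z : Fin (n + 1) → ℝ,
          sgn (z 0) * z j * ∏ i, exp (-(z i) ^ 2) = ∏ i, f i (z i) := by
        intro z
        have h1 : ∏ i ∈ (Finset.univ.erase 0).erase j, f i (z i)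
            = ∏ i ∈ (Finset.univ.erase 0).erase j, exp (-(z i) ^ 2) :=
          Finset.prod_congr rfl fun i hi => by
            simp only [hf]
            rw [if_neg (Finset.ne_of_mem_erase (Finset.mem_of_mem_erase hi)),
              if_neg (Finset.ne_of_mem_erase hi)]
        rw [← Finset.mul_prod_erase Finset.univ (fun i => f i (z i)) (Finset.mem_univ 0),
          ← Finset.mul_prod_erase _ (fun i => f i (z i)) hjmem, h1,
          ← Finset.mul_prod_erase Finset.univ (fun i => exp (-(z i) ^ 2)) (Finset.mem_univ 0),
          ← Finset.mul_prod_erase _ (fun i => exp (-(z i) ^ 2)) hjmem]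
        have h2 : f 0 (z 0) = sgn (z 0) * exp (-(z 0) ^ 2) := by
          simp only [hf, if_pos rfl]
        have h3 : f j (z j) = z j * exp (-(z j) ^ 2) := by
          simp [hf, hj]
        rw [h2, h3]
        ring
      simp_rw [hprod]
      rw [MeasureTheory.volume_pi, MeasureTheory.integral_fintype_prod_eq_prod f]
      refine Finset.prod_eq_zero (Finset.mem_univ 0) ?_
      have h2 : f 0 = fun t => sgn t * exp (-t ^ 2) := by
        funext t; simp only [hf, if_pos rfl]
      rw [h2]
      exact integral_sgn_exp
  -- Step 2: polar coordinates
  have hKint : (∫ r : Set.Ioi (0 : ℝ), (r : ℝ) * exp (-(r : ℝ) ^ 2)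
      ∂(Measure.volumeIoiPow n)) = K := by
    simp only [Measure.volumeIoiPow, ENNReal.ofReal]
    rw [integral_withDensity_eq_integral_smul
      ((measurable_subtype_coe.pow_const _).real_toNNReal)
      (fun r : Set.Ioi (0 : ℝ) => (r : ℝ) * exp (-(r : ℝ) ^ 2))]
    rw [integral_subtype_comap measurableSet_Ioi
      (fun a : ℝ => (a ^ n).toNNReal • (a * exp (-a ^ 2)))]
    rw [setIntegral_congr_fun (g := fun x : ℝ => x ^ (n + 1) * exp (-x ^ 2))
      measurableSet_Ioi (fun x hx => ?_)]
    · rw [radial_integral (n + 1), hKdef]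
      congr 2
      push_cast
      ring
    · have hx0 : (0 : ℝ) < x := hx
      rw [NNReal.smul_def, Real.coe_toNNReal _ (pow_nonneg hx0.le _), smul_eq_mul]
      ring
  have polar : ∀ j : Fin (n + 1),
      (∫ l : sphere (0 : EuclideanSpace ℝ (Fin (n + 1))) 1,
          sgn ⟪b, (l : EuclideanSpace ℝ (Fin (n + 1)))⟫ *
            ⟪B j, (l : EuclideanSpace ℝ (Fin (n + 1)))⟫ ∂(sphereSurfaceMeasure n)) * K
        = ∫ x : EuclideanSpace ℝ (Fin (n + 1)), sgn ⟪b, x⟫ * ⟪B j, x⟫ * exp (-‖x‖ ^ 2) := by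
    intro j
    rw [← hKint, ← MeasureTheory.integral_prod_mul
      (μ := sphereSurfaceMeasure n) (ν := Measure.volumeIoiPow n)
      (f := fun l : sphere (0 : EuclideanSpace ℝ (Fin (n + 1))) 1 =>
        sgn ⟪b, (l : EuclideanSpace ℝ (Fin (n + 1)))⟫ *
          ⟪B j, (l : EuclideanSpace ℝ (Fin (n + 1)))⟫)
      (g := fun r : Set.Ioi (0 : ℝ) => (r : ℝ) * exp (-(r : ℝ) ^ 2))]
    have hmp := (Measure.measurePreserving_homeomorphUnitSphereProd
      (volume : Measure (EuclideanSpace ℝ (Fin (n + 1))))).integral_comp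
      (Homeomorph.measurableEmbedding _)
      (fun p : sphere (0 : EuclideanSpace ℝ (Fin (n + 1))) 1 × Set.Ioi (0 : ℝ) =>
        (sgn ⟪b, (p.1 : EuclideanSpace ℝ (Fin (n + 1)))⟫ *
          ⟪B j, (p.1 : EuclideanSpace ℝ (Fin (n + 1)))⟫) *
          ((p.2 : ℝ) * exp (-(p.2 : ℝ) ^ 2)))
    simp only [hdim, Nat.add_sub_cancel] at hmp
    have hts : (volume : Measure (EuclideanSpace ℝ (Fin (n + 1)))).toSphere
        = sphereSurfaceMeasure n := rfl
    rw [hts] at hmp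
    rw [← hmp]
    have heq : ∀ x : ({0}ᶜ : Set (EuclideanSpace ℝ (Fin (n + 1)))),
        (sgn ⟪b, ((homeomorphUnitSphereProd _ x).1 : EuclideanSpace ℝ (Fin (n + 1)))⟫ *
          ⟪B j, ((homeomorphUnitSphereProd _ x).1 : EuclideanSpace ℝ (Fin (n + 1)))⟫) *
          (((homeomorphUnitSphereProd _ x).2 : ℝ) *
            exp (-((homeomorphUnitSphereProd _ x).2 : ℝ) ^ 2))
        = sgn ⟪b, (x : EuclideanSpace ℝ (Fin (n + 1)))⟫ *
            ⟪B j, (x : EuclideanSpace ℝ (Fin (n + 1)))⟫ *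
            exp (-‖(x : EuclideanSpace ℝ (Fin (n + 1)))‖ ^ 2) := by
      intro x
      have hx : (x : EuclideanSpace ℝ (Fin (n + 1))) ≠ 0 := x.2
      have hnorm : 0 < ‖(x : EuclideanSpace ℝ (Fin (n + 1)))‖ := norm_pos_iff.2 hx
      simp only [homeomorphUnitSphereProd_apply_fst_coe, homeomorphUnitSphereProd_apply_snd_coe]
      rw [real_inner_smul_right, real_inner_smul_right, sgn_mul_pos (inv_pos.2 hnorm)]
      field_simp
    calc
      ∫ x : ({0}ᶜ : Set (EuclideanSpace ℝ (Fin (n + 1)))),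
          (sgn ⟪b, ((homeomorphUnitSphereProd _ x).1 : EuclideanSpace ℝ (Fin (n + 1)))⟫ *
            ⟪B j, ((homeomorphUnitSphereProd _ x).1 : EuclideanSpace ℝ (Fin (n + 1)))⟫) *
            (((homeomorphUnitSphereProd _ x).2 : ℝ) *
              exp (-((homeomorphUnitSphereProd _ x).2 : ℝ) ^ 2))
          ∂((volume : Measure (EuclideanSpace ℝ (Fin (n + 1)))).comap Subtype.val)
        = ∫ x : ({0}ᶜ : Set (EuclideanSpace ℝ (Fin (n + 1)))),
            sgn ⟪b, (x : EuclideanSpace ℝ (Fin (n + 1)))⟫ *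
              ⟪B j, (x : EuclideanSpace ℝ (Fin (n + 1)))⟫ *
              exp (-‖(x : EuclideanSpace ℝ (Fin (n + 1)))‖ ^ 2)
            ∂((volume : Measure (EuclideanSpace ℝ (Fin (n + 1)))).comap Subtype.val) := by
          exact integral_congr_ae (Filter.Eventually.of_forall heq)
      _ = ∫ x in ({0}ᶜ : Set (EuclideanSpace ℝ (Fin (n + 1)))),
            sgn ⟪b, x⟫ * ⟪B j, x⟫ * exp (-‖x‖ ^ 2) := by
          exact integral_subtype_comap
            (μ := (volume : Measure (EuclideanSpace ℝ (Fin (n + 1)))))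
            (measurableSet_singleton 0).compl
            (fun x : EuclideanSpace ℝ (Fin (n + 1)) =>
              sgn ⟪b, x⟫ * ⟪B j, x⟫ * exp (-‖x‖ ^ 2))
      _ = ∫ x : EuclideanSpace ℝ (Fin (n + 1)),
            sgn ⟪b, x⟫ * ⟪B j, x⟫ * exp (-‖x‖ ^ 2) := by
          rw [MeasureTheory.restrict_compl_singleton]
  -- Step 3: integrability of the vector integrand on the sphere
  have hFmeas : Measurable (fun l : sphere (0 : EuclideanSpace ℝ (Fin (n + 1))) 1 =>
      sgn ⟪b, (l : EuclideanSpace ℝ (Fin (n + 1)))⟫ • (l : EuclideanSpace ℝ (Fin (n + 1)))) := by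
    refine Measurable.smul (f := fun l : sphere (0 : EuclideanSpace ℝ (Fin (n + 1))) 1 => sgn ⟪b, (l : EuclideanSpace ℝ (Fin (n + 1)))⟫) ?_ continuous_subtype_val.measurable
    exact measurable_sgn.comp
      ((continuous_const.inner continuous_subtype_val).measurable)
  have hF : Integrable (fun l : sphere (0 : EuclideanSpace ℝ (Fin (n + 1))) 1 =>
      sgn ⟪b, (l : EuclideanSpace ℝ (Fin (n + 1)))⟫ • (l : EuclideanSpace ℝ (Fin (n + 1))))
      (sphereSurfaceMeasure n) := by
    refine (integrable_const (1 : ℝ)).mono' hFmeas.aestronglyMeasurable ?_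
    filter_upwards with l
    rw [norm_smul, Real.norm_eq_abs, abs_sgn, one_mul,
      mem_sphere_zero_iff_norm.1 l.2]
  set I := ∫ l : sphere (0 : EuclideanSpace ℝ (Fin (n + 1))) 1,
      sgn ⟪b, (l : EuclideanSpace ℝ (Fin (n + 1)))⟫ • (l : EuclideanSpace ℝ (Fin (n + 1)))
      ∂(sphereSurfaceMeasure n) with hI
  have hinner : ∀ j : Fin (n + 1), ⟪B j, I⟫
      = ∫ l : sphere (0 : EuclideanSpace ℝ (Fin (n + 1))) 1,
          sgn ⟪b, (l : EuclideanSpace ℝ (Fin (n + 1)))⟫ *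
            ⟪B j, (l : EuclideanSpace ℝ (Fin (n + 1)))⟫ ∂(sphereSurfaceMeasure n) := by
    intro j
    rw [hI, ← integral_inner hF (B j)]
    congr 1
    funext l
    rw [real_inner_smul_right]
  have hcomp : ∀ j : Fin (n + 1), ⟪B j, I⟫ * K = if j = 0 then Real.sqrt π ^ n else 0 := by
    intro j
    rw [hinner j, polar j, euclid j]
  -- Step 4: conclude
  have hfinal : ⟪B 0, I⟫ = (2 / (n : ℝ)) * sphereArea n := by
    have h0 := hcomp 0
    rw [if_pos rfl] at h0
    have htarget : ((2 / (n : ℝ)) * sphereArea n) * K = Real.sqrt π ^ n := by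
      have hsqrt : Real.sqrt π ^ n = π ^ ((n : ℝ) / 2) := by
        rw [Real.sqrt_eq_rpow, ← Real.rpow_natCast (π ^ ((1 : ℝ) / 2)) n,
          ← Real.rpow_mul pi_pos.le]
        congr 1
        ring
      have hGamma : Real.Gamma ((n : ℝ) / 2 + 1) = ((n : ℝ) / 2) * Real.Gamma ((n : ℝ) / 2) :=
        Real.Gamma_add_one (by positivity)
      have hGpos : 0 < Real.Gamma ((n : ℝ) / 2) := Real.Gamma_pos_of_pos (by positivity)
      rw [hsqrt, hKdef, hGamma, sphereArea]
      field_simp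
    exact mul_right_cancel₀ (ne_of_gt hKpos) (h0.trans htarget.symm)
  have hzero : ∀ j : Fin (n + 1), j ≠ 0 → ⟪B j, I⟫ = 0 := by
    intro j hj
    have h0 := hcomp j
    rw [if_neg hj] at h0
    exact (mul_eq_zero.1 h0).resolve_right (ne_of_gt hKpos)
  have hsum := B.sum_repr' I
  rw [← hsum]
  rw [Finset.sum_eq_single 0 (fun j _ hj => by rw [hzero j hj, zero_smul])
    (fun h => absurd (Finset.mem_univ 0) h)]
  rw [hfinal, hB]
end

section
/- For every natural number n ≥ 1, the quantity p = (2/(n√π)) · Γ((n+1)/2)/Γ(n/2) satisfies √(1/(2πn)) ≤ p ≤ √(2/(πn)). (This is the two-sided bound on the acceptance probability of one round of the rejection-sampling protocol on the sphere S^n.) -/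
open Real

lemma gamma_half_upper {x : ℝ} (hx : 0 < x) :
    Real.Gamma (x + 1/2) ≤ Real.sqrt x * Real.Gamma x := by
  have h := Real.Gamma_mul_add_mul_le_rpow_Gamma_mul_rpow_Gamma hx
    (by linarith : (0:ℝ) < x + 1) (by norm_num : (0:ℝ) < 1/2)
    (by norm_num : (0:ℝ) < 1/2) (by norm_num)
  have h1 : (1/2 : ℝ) * x + 1/2 * (x + 1) = x + 1/2 := by ring
  rw [h1] at h
  have hg : 0 ≤ Real.Gamma x := (Real.Gamma_pos_of_pos hx).le
  have hg1 : 0 ≤ Real.Gamma (x + 1) := (Real.Gamma_pos_of_pos (by linarith)).le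
  calc Real.Gamma (x + 1/2) ≤ Real.Gamma x ^ (1/2 : ℝ) * Real.Gamma (x+1) ^ (1/2 : ℝ) := h
    _ = Real.sqrt (Real.Gamma x * Real.Gamma (x+1)) := by
        rw [← Real.mul_rpow hg hg1, ← Real.sqrt_eq_rpow]
    _ = Real.sqrt x * Real.Gamma x := by
        rw [Real.Gamma_add_one hx.ne']
        rw [show Real.Gamma x * (x * Real.Gamma x) = x * Real.Gamma x ^ 2 by ring]
        rw [Real.sqrt_mul hx.le, Real.sqrt_sq hg]

lemma gamma_half_lower {x : ℝ} (hx : 1/2 < x) :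
    Real.sqrt (x - 1/2) * Real.Gamma x ≤ Real.Gamma (x + 1/2) := by
  have hx0 : 0 < x := by linarith
  have hxm : 0 < x - 1/2 := by linarith
  have h := Real.Gamma_mul_add_mul_le_rpow_Gamma_mul_rpow_Gamma hxm
    (by linarith : (0:ℝ) < x + 1/2) (by norm_num : (0:ℝ) < 1/2)
    (by norm_num : (0:ℝ) < 1/2) (by norm_num)
  have h1 : (1/2 : ℝ) * (x - 1/2) + 1/2 * (x + 1/2) = x := by ring
  rw [h1] at h
  have hgm : 0 ≤ Real.Gamma (x - 1/2) := (Real.Gamma_pos_of_pos hxm).le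
  have hgp : 0 ≤ Real.Gamma (x + 1/2) := (Real.Gamma_pos_of_pos (by linarith)).le
  have key : Real.Gamma (x + 1/2) = (x - 1/2) * Real.Gamma (x - 1/2) := by
    have := Real.Gamma_add_one hxm.ne'
    rw [show x - 1/2 + 1 = x + 1/2 by ring] at this
    exact this
  have h2 : Real.Gamma x ≤ Real.sqrt (Real.Gamma (x - 1/2) * Real.Gamma (x + 1/2)) := by
    calc Real.Gamma x ≤ Real.Gamma (x-1/2) ^ (1/2:ℝ) * Real.Gamma (x+1/2) ^ (1/2:ℝ) := h
      _ = Real.sqrt (Real.Gamma (x-1/2) * Real.Gamma (x+1/2)) := by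
          rw [← Real.mul_rpow hgm hgp, ← Real.sqrt_eq_rpow]
  calc Real.sqrt (x - 1/2) * Real.Gamma x
      ≤ Real.sqrt (x - 1/2) * Real.sqrt (Real.Gamma (x-1/2) * Real.Gamma (x+1/2)) :=
        mul_le_mul_of_nonneg_left h2 (Real.sqrt_nonneg _)
    _ = Real.sqrt ((x - 1/2) * (Real.Gamma (x-1/2) * Real.Gamma (x+1/2))) :=
        (Real.sqrt_mul hxm.le _).symm
    _ = Real.sqrt (Real.Gamma (x+1/2) ^ 2) := by rw [key]; ring_nf
    _ = Real.Gamma (x + 1/2) := Real.sqrt_sq hgp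

theorem acceptance_probability_bounds (n : ℕ) (hn : 1 ≤ n) :
    Real.sqrt (1 / (2 * Real.pi * n)) ≤
        2 / (n * Real.sqrt Real.pi) *
          (Real.Gamma ((n + 1 : ℝ) / 2) / Real.Gamma ((n : ℝ) / 2)) ∧
      2 / (n * Real.sqrt Real.pi) *
          (Real.Gamma ((n + 1 : ℝ) / 2) / Real.Gamma ((n : ℝ) / 2)) ≤
        Real.sqrt (2 / (Real.pi * n)) := by
  have hπ := Real.pi_pos
  have hn0 : (0:ℝ) < n := by exact_mod_cast hn
  have hx : (0:ℝ) < n/2 := by linarith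
  have hgn : 0 < Real.Gamma ((n:ℝ)/2) := Real.Gamma_pos_of_pos hx
  have hgn1 : 0 < Real.Gamma (((n:ℝ)+1)/2) := Real.Gamma_pos_of_pos (by linarith)
  have heq : ((n:ℝ)+1)/2 = (n:ℝ)/2 + 1/2 := by ring
  have hsπ : 0 < Real.sqrt Real.pi := Real.sqrt_pos.mpr hπ
  constructor
  · -- lower bound
    rcases eq_or_lt_of_le hn with h1 | h2
    · -- n = 1
      subst_vars
      rw [Nat.cast_one]
      rw [show ((1:ℝ)+1)/2 = 1 by norm_num, show ((1:ℝ))/2 = 1/2 by norm_num,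
        Real.Gamma_one, Real.Gamma_one_half_eq]
      have hrhs : 2 / (1 * Real.sqrt Real.pi) * (1 / Real.sqrt Real.pi) = 2 / Real.pi := by
        rw [one_mul, div_mul_div_comm, mul_one, Real.mul_self_sqrt hπ.le]
      rw [hrhs, show (2:ℝ)/Real.pi = Real.sqrt ((2/Real.pi)^2) from
        (Real.sqrt_sq (by positivity)).symm]
      apply Real.sqrt_le_sqrt
      rw [div_pow, div_le_div_iff₀ (by positivity) (by positivity)]
      nlinarith [Real.pi_le_four, hπ]
    · -- n ≥ 2
      have hn2 : (2:ℝ) ≤ n := by exact_mod_cast h2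
      have hlow := gamma_half_lower (x := (n:ℝ)/2) (by linarith)
      rw [← heq] at hlow
      -- p ≥ 2/(n√π) * √(n/2 - 1/2)
      have step : Real.sqrt (1 / (2 * Real.pi * n)) ≤
          2 / (n * Real.sqrt Real.pi) * (Real.sqrt ((n:ℝ)/2 - 1/2)) := by
        rw [show (2:ℝ) / (n * Real.sqrt Real.pi) * Real.sqrt ((n:ℝ)/2 - 1/2)
            = Real.sqrt (4 * ((n:ℝ)/2 - 1/2) / (n^2 * Real.pi)) from ?_]
        · apply Real.sqrt_le_sqrt
          rw [div_le_div_iff₀ (by positivity) (by positivity)]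
          ring_nf
          nlinarith [sq_nonneg ((n:ℝ) - 2), hπ]
        · rw [show (2:ℝ) / (n * Real.sqrt Real.pi) * Real.sqrt ((n:ℝ)/2 - 1/2)
              = Real.sqrt ((2 / (n * Real.sqrt Real.pi))^2 * ((n:ℝ)/2 - 1/2)) from ?_]
          · congr 1
            rw [div_pow, mul_pow, Real.sq_sqrt hπ.le]
            field_simp
            ring
          · rw [Real.sqrt_mul (by positivity), Real.sqrt_sq (by positivity)]
      calc Real.sqrt (1 / (2 * Real.pi * n))
          ≤ 2 / (n * Real.sqrt Real.pi) * Real.sqrt ((n:ℝ)/2 - 1/2) := step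
        _ ≤ 2 / (n * Real.sqrt Real.pi) *
            (Real.Gamma ((n + 1 : ℝ) / 2) / Real.Gamma ((n : ℝ) / 2)) := by
            apply mul_le_mul_of_nonneg_left _ (by positivity)
            rw [le_div_iff₀ hgn]
            exact hlow
  · have hup := gamma_half_upper (x := (n:ℝ)/2) hx
    rw [← heq] at hup
    calc 2 / (n * Real.sqrt Real.pi) *
          (Real.Gamma ((n + 1 : ℝ) / 2) / Real.Gamma ((n : ℝ) / 2))
        ≤ 2 / (n * Real.sqrt Real.pi) * Real.sqrt ((n:ℝ)/2) := by
          apply mul_le_mul_of_nonneg_left _ (by positivity)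
          rw [div_le_iff₀ hgn]
          exact hup
      _ = Real.sqrt (2 / (Real.pi * n)) := by
          rw [show (2:ℝ) / (n * Real.sqrt Real.pi) * Real.sqrt ((n:ℝ)/2)
              = Real.sqrt ((2 / (n * Real.sqrt Real.pi))^2 * ((n:ℝ)/2)) from ?_]
          · congr 1
            rw [div_pow, mul_pow, Real.sq_sqrt hπ.le]
            field_simp
          · rw [Real.sqrt_mul (by positivity), Real.sqrt_sq (by positivity)]
end
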